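/- If a density operator ρ on ℂ²⊗ℂ² has an eigendecomposition ρ = Σ_i λ_i |α_i⟩⟨α_i|⊗|β_i⟩⟨β_i| in which every eigenvector (with λ_i > 0) is a product vector, then ρ can be written either in the form Σ_k p_k |ψ_k⟩⟨ψ_k| ⊗ ρ_k with {|ψ_k⟩} orthonormal in ℂ² and ρ_k density operators, or in the form Σ_k p_k ρ_k ⊗ |ψ_k⟩⟨ψ_k| with {|ψ_k⟩} orthonormal. -/

import Mathlib

open Matrix
open scoped ComplexOrder

/-- Rank-one projector |v⟩⟨v|. -/
noncomputable def proj {n : Type*} (v : n → ℂ) : Matrix n n ℂ :=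
  Matrix.vecMulVec v (star v)

/-- Tensor product of vectors. -/
noncomputable def tens {a b : Type*} (v : a → ℂ) (w : b → ℂ) : a × b → ℂ :=
  fun p => v p.1 * w p.2

/-- Hermitian inner product ⟨u|v⟩. -/
noncomputable def inner' {n : Type*} [Fintype n] (u v : n → ℂ) : ℂ :=
  dotProduct (star u) v

/-- Square root of a positive semidefinite matrix (as in the older Mathlib). -/
noncomputable def Matrix.PosSemidef.sqrt {𝕜 : Type*} [RCLike 𝕜] {n : Type*} [Fintype n] [DecidableEq n]
    {A : Matrix n n 𝕜} (hA : A.PosSemidef) : Matrix n n 𝕜 :=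
  hA.1.eigenvectorUnitary.1 * diagonal ((↑) ∘ (√·) ∘ hA.1.eigenvalues) *
    (star hA.1.eigenvectorUnitary : Matrix n n 𝕜)

open Classical in
/-- Uhlmann fidelity Tr √(√ρ σ √ρ) (0 if inputs are not positive semidefinite). -/
noncomputable def fid {n : Type*} [Fintype n] [DecidableEq n]
    (ρ σ : Matrix n n ℂ) : ℝ :=
  if h : ρ.PosSemidef ∧ σ.PosSemidef then
    ((h.2.mul_mul_conjTranspose_same h.1.sqrt).sqrt).trace.re
  else 0

/-- Partial trace over the second subsystem. -/
noncomputable def ptraceB {a b : Type*} [Fintype b] (M : Matrix (a × b) (a × b) ℂ) : Matrix a a ℂ :=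
  fun i j => ∑ k, M (i, k) (j, k)

/-- Partial trace over the first subsystem. -/
noncomputable def ptraceA {a b : Type*} [Fintype a] (M : Matrix (a × b) (a × b) ℂ) : Matrix b b ℂ :=
  fun i j => ∑ k, M (k, i) (k, j)


section basics
variable {n : Type*} [Fintype n]

lemma inner'_def (u v : n → ℂ) : inner' u v = ∑ x, (starRingEnd ℂ) (u x) * v x := rfl

lemma inner'_conj (u v : n → ℂ) : inner' v u = (starRingEnd ℂ) (inner' u v) := by
  simp [inner'_def, Finset.sum_congr, map_sum, mul_comm]

lemma inner'_self_eq (v : n → ℂ) :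
    inner' v v = ((∑ x, Complex.normSq (v x) : ℝ) : ℂ) := by
  simp [inner'_def, Complex.normSq_eq_conj_mul_self]

lemma inner'_self_nonneg (v : n → ℂ) : 0 ≤ ∑ x, Complex.normSq (v x) :=
  Finset.sum_nonneg fun x _ => Complex.normSq_nonneg _

lemma inner'_self_eq_zero {v : n → ℂ} : inner' v v = 0 ↔ v = 0 := by
  rw [inner'_self_eq]
  constructor
  · intro h
    have h' : (∑ x, Complex.normSq (v x) : ℝ) = 0 := by exact_mod_cast h
    funext x
    have := (Finset.sum_eq_zero_iff_of_nonneg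
      (fun x _ => Complex.normSq_nonneg (v x))).1 h' x (Finset.mem_univ x)
    simpa using Complex.normSq_eq_zero.1 this
  · intro h; simp [h]

lemma inner'_self_ne_zero {v : n → ℂ} (hv : v ≠ 0) : inner' v v ≠ 0 :=
  fun h => hv (inner'_self_eq_zero.1 h)

lemma inner'_smul_left (c : ℂ) (u v : n → ℂ) :
    inner' (c • u) v = (starRingEnd ℂ) c * inner' u v := by
  simp [inner'_def, Finset.mul_sum, mul_assoc]

lemma inner'_smul_right (c : ℂ) (u v : n → ℂ) :
    inner' u (c • v) = c * inner' u v := by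
  simp [inner'_def, Finset.mul_sum]; ring_nf
  exact Finset.sum_congr rfl fun x _ => by ring

lemma inner'_eq_zero_symm {u v : n → ℂ} (h : inner' u v = 0) : inner' v u = 0 := by
  rw [inner'_conj, h, map_zero]

lemma inner'_ne_zero_symm {u v : n → ℂ} (h : inner' u v ≠ 0) : inner' v u ≠ 0 := by
  rw [inner'_conj]; simpa using h

lemma inner'_tens {a b : Type*} [Fintype a] [Fintype b]
    (u u' : a → ℂ) (v v' : b → ℂ) :
    inner' (tens u v) (tens u' v') = inner' u u' * inner' v v' := by
  simp only [inner'_def, tens]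
  rw [Finset.sum_mul_sum, Fintype.sum_prod_type]
  refine Finset.sum_congr rfl fun x _ => Finset.sum_congr rfl fun y _ => ?_
  simp only [_root_.map_mul]; ring

lemma proj_apply (v : n → ℂ) (i j : n) : proj v i j = v i * (starRingEnd ℂ) (v j) := rfl

lemma proj_smul (c : ℂ) (v : n → ℂ) :
    proj (c • v) = ((Complex.normSq c : ℝ) : ℂ) • proj v := by
  ext i j
  simp [proj_apply, Complex.normSq_eq_conj_mul_self]
  ring

lemma trace_proj [DecidableEq n] (v : n → ℂ) : (proj v).trace = inner' v v := by
  simp [Matrix.trace, Matrix.diag, proj_apply, inner'_def, mul_comm]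

lemma proj_psd (v : n → ℂ) : (proj v).PosSemidef := by
  rw [Matrix.posSemidef_iff_dotProduct_mulVec]
  constructor
  · ext i j
    simp [Matrix.conjTranspose_apply, proj_apply, mul_comm]
  · intro x
    have h1 : (proj v).mulVec x = fun i => v i * inner' v x := by
      funext i
      simp only [Matrix.mulVec, dotProduct, proj_apply, inner'_def, Finset.mul_sum]
      exact Finset.sum_congr rfl fun j _ => by ring
    have h2 : dotProduct (star x) ((proj v).mulVec x)
        = inner' x v * inner' v x := by
      rw [h1]
      simp only [dotProduct, inner'_def, Pi.star_apply, Finset.sum_mul]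
      exact Finset.sum_congr rfl fun j _ => by simp only [RCLike.star_def]; ring
    rw [h2, inner'_conj x v, Complex.mul_conj]
    exact Complex.zero_le_real.2 (Complex.normSq_nonneg _)

end basics

open Kronecker in
lemma proj_tens {a b : Type*} (u : a → ℂ) (v : b → ℂ) :
    proj (tens u v) = proj u ⊗ₖ proj v := by
  ext ⟨x, y⟩ ⟨x', y'⟩
  simp only [proj_apply, tens, Matrix.kroneckerMap_apply, _root_.map_mul]
  ring

section psd
variable {n : Type*} [Fintype n]

lemma psd_smul {M : Matrix n n ℂ} (h : M.PosSemidef) {r : ℝ} (hr : 0 ≤ r) :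
    (((r : ℝ) : ℂ) • M).PosSemidef := by
  rw [Matrix.posSemidef_iff_dotProduct_mulVec]
  constructor
  · ext i j
    simp only [Matrix.conjTranspose_apply, Matrix.smul_apply, star_smul, Complex.star_def,
      Complex.conj_ofReal]
    congr 1
    simpa [Matrix.conjTranspose_apply] using congrFun (congrFun h.1 i) j
  · intro x
    have : dotProduct (star x) ((((r : ℝ) : ℂ) • M).mulVec x)
        = ((r : ℝ) : ℂ) * dotProduct (star x) (M.mulVec x) := by
      simp [Matrix.smul_mulVec, dotProduct_smul, smul_eq_mul]
    rw [this]
    exact mul_nonneg (Complex.zero_le_real.2 hr) (h.dotProduct_mulVec_nonneg x)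

lemma psd_sum {ι : Type*} (s : Finset ι) (f : ι → Matrix n n ℂ)
    (h : ∀ i ∈ s, (f i).PosSemidef) : (∑ i ∈ s, f i).PosSemidef :=
  Finset.sum_induction f (fun M => M.PosSemidef)
    (fun _ _ ha hb => ha.add hb) Matrix.PosSemidef.zero h

end psd

section twodim

noncomputable def pvec (w : Fin 2 → ℂ) : Fin 2 → ℂ :=
  ![(starRingEnd ℂ) (w 1), -((starRingEnd ℂ) (w 0))]

lemma inner'_pvec_right (w : Fin 2 → ℂ) : inner' w (pvec w) = 0 := by
  simp [inner'_def, pvec, Fin.sum_univ_two]; ring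

lemma inner'_pvec_self (w : Fin 2 → ℂ) : inner' (pvec w) (pvec w) = inner' w w := by
  simp [inner'_def, pvec, Fin.sum_univ_two]; ring

lemma fin2_ne_zero {u : Fin 2 → ℂ} (hu : u ≠ 0) : u 0 ≠ 0 ∨ u 1 ≠ 0 := by
  by_contra h
  push_neg at h
  exact hu (funext fun x => by fin_cases x <;> simp [h.1, h.2])

/-- anyone perpendicular to `w ≠ 0` is a multiple of `pvec w`. -/
lemma perp_eq_smul_pvec {u w : Fin 2 → ℂ} (hw : w ≠ 0) (h : inner' u w = 0) :
    ∃ c : ℂ, u = c • pvec w := by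
  have h' : (starRingEnd ℂ) (u 0) * w 0 + (starRingEnd ℂ) (u 1) * w 1 = 0 := by
    simpa [inner'_def, Fin.sum_univ_two] using h
  have key : u 0 * (starRingEnd ℂ) (w 0) + u 1 * (starRingEnd ℂ) (w 1) = 0 := by
    have := congrArg (starRingEnd ℂ) h'
    simpa [map_add, _root_.map_mul] using this
  rcases fin2_ne_zero hw with h0 | h1
  · refine ⟨-(u 1) / (starRingEnd ℂ) (w 0), funext fun x => ?_⟩
    have hw0 : (starRingEnd ℂ) (w 0) ≠ 0 := by simpa using h0
    fin_cases x
    · show u 0 = _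
      simp only [Pi.smul_apply, pvec, smul_eq_mul, Matrix.cons_val_zero, Fin.zero_eta]
      field_simp
      linear_combination key
    · show u 1 = _
      simp only [Pi.smul_apply, pvec, smul_eq_mul, Matrix.cons_val_one, Matrix.head_cons, Fin.mk_one, Matrix.cons_val_fin_one]
      field_simp
  · refine ⟨u 0 / (starRingEnd ℂ) (w 1), funext fun x => ?_⟩
    have hw1 : (starRingEnd ℂ) (w 1) ≠ 0 := by simpa using h1
    fin_cases x
    · show u 0 = _
      simp only [Pi.smul_apply, pvec, smul_eq_mul, Matrix.cons_val_zero, Fin.zero_eta]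
      field_simp
    · show u 1 = _
      simp only [Pi.smul_apply, pvec, smul_eq_mul, Matrix.cons_val_one, Matrix.head_cons, Fin.mk_one, Matrix.cons_val_fin_one]
      field_simp
      linear_combination key

lemma parallel_of_perp_perp {u v w : Fin 2 → ℂ} (hv : v ≠ 0) (hw : w ≠ 0)
    (huw : inner' u w = 0) (hvw : inner' v w = 0) : ∃ c : ℂ, u = c • v := by
  obtain ⟨c, hc⟩ := perp_eq_smul_pvec hw huw
  obtain ⟨d, hd⟩ := perp_eq_smul_pvec hw hvw
  have hd0 : d ≠ 0 := by
    rintro rfl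
    simp at hd
    exact hv hd
  refine ⟨c / d, ?_⟩
  rw [hc, hd, smul_smul, div_mul_cancel₀ _ hd0]

lemma inner'_ne_zero_of_parallel {u v : Fin 2 → ℂ} (hu : u ≠ 0) {c : ℂ} (h : u = c • v) :
    inner' u v ≠ 0 := by
  have hc : c ≠ 0 := by rintro rfl; simp at h; exact hu h
  have hv : v ≠ 0 := by rintro rfl; simp at h; exact hu h
  rw [h, inner'_smul_left]
  exact mul_ne_zero (by simpa using hc) (inner'_self_ne_zero hv)

lemma eq_zero_of_perp_perp {u v w : Fin 2 → ℂ} (hu : u ≠ 0) (hv : v ≠ 0)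
    (huv : inner' u v = 0) (hwu : inner' w u = 0) (hwv : inner' w v = 0) : w = 0 := by
  by_contra hw
  obtain ⟨c, hc⟩ := parallel_of_perp_perp hv hu hwu (inner'_eq_zero_symm huv)
  exact inner'_ne_zero_of_parallel hw hc hwv
end twodim

open Kronecker

lemma kron_sum_right {ι : Type*} (s : Finset ι) (A : Matrix (Fin 2) (Fin 2) ℂ)
    (B : ι → Matrix (Fin 2) (Fin 2) ℂ) :
    A ⊗ₖ (∑ i ∈ s, B i) = ∑ i ∈ s, A ⊗ₖ B i := by
  ext ⟨x, y⟩ ⟨x', y'⟩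
  simp [Matrix.kroneckerMap_apply, Matrix.sum_apply, Finset.mul_sum]

lemma core {ι : Type*} [Fintype ι] [Nonempty ι]
    (lam : ι → ℝ) (γ δ : ι → Fin 2 → ℂ)
    (hlam : ∀ i, 0 < lam i) (hsum : ∑ i, lam i = 1)
    (hnorm : ∀ i, inner' (γ i) (γ i) * inner' (δ i) (δ i) = 1)
    (hpar : ∀ i j, (∃ c : ℂ, γ i = c • γ j) ∨ inner' (γ i) (γ j) = 0) :
    ∃ (p : Fin 2 → ℝ) (ψ : Fin 2 → Fin 2 → ℂ) (σ : Fin 2 → Matrix (Fin 2) (Fin 2) ℂ),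
      (∀ k, 0 ≤ p k) ∧ (∑ k, p k = 1) ∧
      (∀ k l, inner' (ψ k) (ψ l) = if k = l then 1 else 0) ∧
      (∀ k, (σ k).PosSemidef ∧ (σ k).trace = 1) ∧
      (∑ i, ((lam i : ℝ) : ℂ) • (proj (γ i) ⊗ₖ proj (δ i)))
        = ∑ k, ((p k : ℝ) : ℂ) • (proj (ψ k) ⊗ₖ σ k) := by
  classical
  -- nonvanishing
  have hγ : ∀ i, γ i ≠ 0 := by
    intro i hi
    have := hnorm i
    rw [hi] at this
    simp [inner'_def] at this
  have hδ : ∀ i, δ i ≠ 0 := by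
    intro i hi
    have := hnorm i
    rw [hi] at this
    simp [inner'_def] at this
  -- squared norms as reals
  set gr : ι → ℝ := fun i => ∑ x, Complex.normSq (γ i x) with hgr
  set dr : ι → ℝ := fun i => ∑ x, Complex.normSq (δ i x) with hdr
  have hgr' : ∀ i, inner' (γ i) (γ i) = ((gr i : ℝ) : ℂ) := fun i => inner'_self_eq _
  have hdr' : ∀ i, inner' (δ i) (δ i) = ((dr i : ℝ) : ℂ) := fun i => inner'_self_eq _
  have hgd : ∀ i, gr i * dr i = 1 := by
    intro i
    have := hnorm i
    rw [hgr' i, hdr' i, ← Complex.ofReal_mul] at this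
    exact_mod_cast this
  have hgrpos : ∀ i, 0 < gr i := by
    intro i
    have hne : gr i ≠ 0 := by
      intro h
      exact hγ i (inner'_self_eq_zero.1 (by rw [hgr' i, h]; simp))
    exact lt_of_le_of_ne (inner'_self_nonneg (γ i)) (Ne.symm hne)
  -- reference vector and basis
  set i₀ : ι := Classical.arbitrary ι with hi₀
  set c0 : ℝ := Real.sqrt (gr i₀) with hc0
  have hc0pos : 0 < c0 := Real.sqrt_pos.2 (hgrpos i₀)
  set ψ0 : Fin 2 → ℂ := ((c0⁻¹ : ℝ) : ℂ) • γ i₀ with hψ0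
  set ψ1 : Fin 2 → ℂ := pvec ψ0 with hψ1
  have unit0 : inner' ψ0 ψ0 = 1 := by
    rw [hψ0, inner'_smul_left, inner'_smul_right, hgr' i₀]
    rw [Complex.conj_ofReal, ← Complex.ofReal_mul, ← Complex.ofReal_mul]
    rw [show c0⁻¹ * (c0⁻¹ * gr i₀) = (gr i₀) / (c0 * c0) by field_simp]
    rw [hc0, Real.mul_self_sqrt (le_of_lt (hgrpos i₀))]
    rw [div_self (ne_of_gt (hgrpos i₀))]
    simp
  have unit1 : inner' ψ1 ψ1 = 1 := by rw [hψ1, inner'_pvec_self, unit0]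
  have orth01 : inner' ψ0 ψ1 = 0 := inner'_pvec_right ψ0
  have orth10 : inner' ψ1 ψ0 = 0 := inner'_eq_zero_symm orth01
  have hψ0ne : ψ0 ≠ 0 := by
    intro h; rw [h] at unit0; simp [inner'_def] at unit0
  set ψ : Fin 2 → Fin 2 → ℂ := ![ψ0, ψ1] with hψ
  -- classification
  set cls : ι → Fin 2 := fun i => if inner' (γ i₀) (γ i) = 0 then 1 else 0 with hcls
  -- each γ i is a multiple of ψ (cls i)
  have key : ∀ i, ∃ c : ℂ, γ i = c • ψ (cls i) := by
    intro i
    by_cases h : inner' (γ i₀) (γ i) = 0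
    · have h1 : inner' (γ i) ψ0 = 0 := by
        rw [hψ0, inner'_smul_right]
        rw [inner'_eq_zero_symm h, mul_zero]
      obtain ⟨c, hc⟩ := perp_eq_smul_pvec hψ0ne h1
      refine ⟨c, ?_⟩
      rw [hcls]
      simp only [h, if_pos]
      rw [hc, hψ, hψ1]
      norm_num
    · rcases hpar i i₀ with ⟨c, hc⟩ | hperp
      · refine ⟨c * (c0 : ℂ), ?_⟩
        rw [hcls]
        simp only [h, if_neg, if_false]
        have : γ i₀ = ((c0 : ℝ) : ℂ) • ψ0 := by
          rw [hψ0, smul_smul, ← Complex.ofReal_mul,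
            mul_inv_cancel₀ (ne_of_gt hc0pos)]
          simp
        rw [hc, this, smul_smul, hψ]
        norm_num
      · exact absurd (inner'_eq_zero_symm hperp) h
  have key2 : ∀ i, proj (γ i) = ((gr i : ℝ) : ℂ) • proj (ψ (cls i)) := by
    intro i
    obtain ⟨c, hc⟩ := key i
    have hunit : inner' (ψ (cls i)) (ψ (cls i)) = 1 := by
      rw [hcls]
      dsimp only
      split <;> simp [hψ, unit0, unit1]
    have hns : ((Complex.normSq c : ℝ) : ℂ) = ((gr i : ℝ) : ℂ) := by
      rw [← hgr' i, hc, inner'_smul_left, inner'_smul_right, hunit, mul_one,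
        mul_comm, Complex.mul_conj]
    rw [hc, proj_smul, hns]
  -- weights
  set p : Fin 2 → ℝ := fun k => ∑ i, if cls i = k then lam i else 0 with hp
  have hp0 : ∀ k, 0 ≤ p k := by
    intro k
    refine Finset.sum_nonneg fun i _ => ?_
    split <;> [exact (hlam i).le; rfl]
  have hpsum : ∑ k, p k = 1 := by
    rw [hp, Finset.sum_comm, ← hsum]
    refine Finset.sum_congr rfl fun i _ => ?_
    rw [Finset.sum_ite_eq]
    simp
  -- unnormalized blocks
  set M : Fin 2 → Matrix (Fin 2) (Fin 2) ℂ := fun k =>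
    ∑ i, if cls i = k then ((lam i * gr i : ℝ) : ℂ) • proj (δ i) else 0 with hM
  have hMpsd : ∀ k, (M k).PosSemidef := by
    intro k
    refine psd_sum _ _ fun i _ => ?_
    split
    · exact psd_smul (proj_psd _) (mul_nonneg (hlam i).le (hgrpos i).le)
    · exact Matrix.PosSemidef.zero
  have hMtr : ∀ k, (M k).trace = ((p k : ℝ) : ℂ) := by
    intro k
    rw [hM, Matrix.trace_sum, hp]
    push_cast
    refine Finset.sum_congr rfl fun i _ => ?_
    split
    · rw [Matrix.trace_smul, trace_proj, hdr' i, smul_eq_mul]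
      push_cast
      rw [mul_assoc, ← Complex.ofReal_mul, ← Complex.ofReal_mul, hgd i, mul_one]
    · simp
  have hMzero : ∀ k, p k = 0 → M k = 0 := by
    intro k hk
    have hcl : ∀ i, cls i ≠ k := by
      intro i hi
      have := (Finset.sum_eq_zero_iff_of_nonneg
        (fun i _ => by split <;> [exact (hlam i).le; rfl])).1 hk i (Finset.mem_univ i)
      rw [if_pos hi] at this
      exact absurd this (ne_of_gt (hlam i))
    rw [hM]
    refine Finset.sum_eq_zero fun i _ => ?_
    rw [if_neg (hcl i)]
  -- normalized blocks
  set σ : Fin 2 → Matrix (Fin 2) (Fin 2) ℂ := fun k =>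
    if p k = 0 then ((2⁻¹ : ℝ) : ℂ) • (1 : Matrix (Fin 2) (Fin 2) ℂ)
    else (((p k)⁻¹ : ℝ) : ℂ) • M k with hσ
  have hσgood : ∀ k, (σ k).PosSemidef ∧ (σ k).trace = 1 := by
    intro k
    simp only [hσ]
    split
    · constructor
      · exact psd_smul Matrix.PosSemidef.one (by norm_num)
      · rw [Matrix.trace_smul, Matrix.trace_one]
        simp [Fintype.card_fin]
    · constructor
      · exact psd_smul (hMpsd k) (inv_nonneg.2 (hp0 k))
      · rw [Matrix.trace_smul, hMtr k, smul_eq_mul, ← Complex.ofReal_mul,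
          inv_mul_cancel₀ (by assumption)]
        simp
  have hpσ : ∀ k, ((p k : ℝ) : ℂ) • σ k = M k := by
    intro k
    simp only [hσ]
    split
    · rename_i h
      rw [h, hMzero k h]
      simp
    · rw [smul_smul, ← Complex.ofReal_mul, mul_inv_cancel₀ (by assumption)]
      simp
  refine ⟨p, ψ, σ, hp0, hpsum, ?_, hσgood, ?_⟩
  · intro k l
    fin_cases k <;> fin_cases l <;>
      simp [hψ, unit0, unit1, orth01, orth10]
  · calc ∑ i, ((lam i : ℝ) : ℂ) • (proj (γ i) ⊗ₖ proj (δ i))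
        = ∑ i, ∑ k, (if cls i = k then
            ((lam i * gr i : ℝ) : ℂ) • (proj (ψ k) ⊗ₖ proj (δ i)) else 0) := by
          refine Finset.sum_congr rfl fun i _ => ?_
          rw [Finset.sum_ite_eq]
          simp only [Finset.mem_univ, if_true]
          rw [key2 i, Matrix.smul_kronecker, smul_smul, ← Complex.ofReal_mul]
      _ = ∑ k, ∑ i, (if cls i = k then
            ((lam i * gr i : ℝ) : ℂ) • (proj (ψ k) ⊗ₖ proj (δ i)) else 0) :=
          Finset.sum_comm
      _ = ∑ k, proj (ψ k) ⊗ₖ M k := by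
          refine Finset.sum_congr rfl fun k _ => ?_
          rw [hM, kron_sum_right]
          refine Finset.sum_congr rfl fun i _ => ?_
          split
          · rw [Matrix.kronecker_smul]
          · rw [Matrix.kronecker_zero]
      _ = ∑ k, ((p k : ℝ) : ℂ) • (proj (ψ k) ⊗ₖ σ k) := by
          refine Finset.sum_congr rfl fun k _ => ?_
          rw [← hpσ k, Matrix.kronecker_smul]

section swap

noncomputable def mswap (M : Matrix (Fin 2 × Fin 2) (Fin 2 × Fin 2) ℂ) :
    Matrix (Fin 2 × Fin 2) (Fin 2 × Fin 2) ℂ :=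
  fun p q => M (p.2, p.1) (q.2, q.1)

lemma mswap_kron (A B : Matrix (Fin 2) (Fin 2) ℂ) : mswap (A ⊗ₖ B) = B ⊗ₖ A := by
  ext ⟨x, y⟩ ⟨x', y'⟩
  simp [mswap, Matrix.kroneckerMap_apply, mul_comm]

lemma mswap_sum {ι : Type*} (s : Finset ι) (f : ι → Matrix (Fin 2 × Fin 2) (Fin 2 × Fin 2) ℂ) :
    mswap (∑ i ∈ s, f i) = ∑ i ∈ s, mswap (f i) := by
  ext ⟨x, y⟩ ⟨x', y'⟩
  simp [mswap, Matrix.sum_apply]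

lemma mswap_smul (c : ℂ) (M : Matrix (Fin 2 × Fin 2) (Fin 2 × Fin 2) ℂ) :
    mswap (c • M) = c • mswap M := rfl

end swap

section dich
variable {ι : Type*}

/-- the overlap case `k = i` of the dichotomy argument. -/
lemma caseKI {α β : ι → Fin 2 → ℂ}
    (hα : ∀ i, α i ≠ 0) (hβ : ∀ i, β i ≠ 0)
    (orth : ∀ i j, i ≠ j → inner' (α i) (α j) = 0 ∨ inner' (β i) (β j) = 0)
    {i j l : ι}
    (hij_np : ¬ ∃ c : ℂ, α i = c • α j) (hij_a : inner' (α i) (α j) ≠ 0)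
    (hij_b : inner' (β i) (β j) = 0)
    (hil_np : ¬ ∃ c : ℂ, β i = c • β l) (hil_b : inner' (β i) (β l) ≠ 0)
    (hil_a : inner' (α i) (α l) = 0) : False := by
  have hlj : l ≠ j := by
    rintro rfl
    exact hil_b hij_b
  rcases orth l j hlj with ha | hb
  · exact hij_np (parallel_of_perp_perp (hα j) (hα l) hil_a (inner'_eq_zero_symm ha))
  · exact hil_np (parallel_of_perp_perp (hβ l) (hβ j) hij_b hb)

lemma dichotomy [Fintype ι] {α β : ι → Fin 2 → ℂ}
    (hα : ∀ i, α i ≠ 0) (hβ : ∀ i, β i ≠ 0)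
    (orth : ∀ i j, i ≠ j → inner' (α i) (α j) = 0 ∨ inner' (β i) (β j) = 0) :
    (∀ i j, (∃ c : ℂ, α i = c • α j) ∨ inner' (α i) (α j) = 0) ∨
      (∀ i j, (∃ c : ℂ, β i = c • β j) ∨ inner' (β i) (β j) = 0) := by
  by_contra h
  push_neg at h
  obtain ⟨⟨i, j, hij_np, hij_a⟩, ⟨k, l, hkl_np, hkl_b⟩⟩ := h
  replace hij_np : ¬ ∃ c : ℂ, α i = c • α j := not_exists.mpr hij_np
  replace hkl_np : ¬ ∃ c : ℂ, β k = c • β l := not_exists.mpr hkl_np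
  -- basic consequences
  have hij_ne : i ≠ j := by rintro rfl; exact hij_np ⟨1, (one_smul _ _).symm⟩
  have hkl_ne : k ≠ l := by rintro rfl; exact hkl_np ⟨1, (one_smul _ _).symm⟩
  have hij_b : inner' (β i) (β j) = 0 := (orth i j hij_ne).resolve_left hij_a
  have hkl_a : inner' (α k) (α l) = 0 := by
    rcases orth k l hkl_ne with ha | hb
    · exact ha
    · exact absurd hb hkl_b
  -- symmetric versions
  have hji_np : ¬ ∃ c : ℂ, α j = c • α i := by
    rintro ⟨c, hc⟩
    have hc0 : c ≠ 0 := by rintro rfl; simp at hc; exact hα j hc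
    exact hij_np ⟨c⁻¹, by rw [hc, smul_smul, inv_mul_cancel₀ hc0, one_smul]⟩
  have hlk_np : ¬ ∃ c : ℂ, β l = c • β k := by
    rintro ⟨c, hc⟩
    have hc0 : c ≠ 0 := by rintro rfl; simp at hc; exact hβ l hc
    exact hkl_np ⟨c⁻¹, by rw [hc, smul_smul, inv_mul_cancel₀ hc0, one_smul]⟩
  have hji_a : inner' (α j) (α i) ≠ 0 := inner'_ne_zero_symm hij_a
  have hji_b : inner' (β j) (β i) = 0 := inner'_eq_zero_symm hij_b
  have hlk_b : inner' (β l) (β k) ≠ 0 := inner'_ne_zero_symm hkl_b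
  have hlk_a : inner' (α l) (α k) = 0 := inner'_eq_zero_symm hkl_a
  by_cases hki : k = i
  · subst hki
    exact caseKI hα hβ orth hij_np hij_a hij_b hkl_np hkl_b hkl_a
  by_cases hkj : k = j
  · subst hkj
    exact caseKI hα hβ orth hji_np hji_a hji_b hkl_np hkl_b hkl_a
  by_cases hli : l = i
  · subst hli
    exact caseKI hα hβ orth hij_np hij_a hij_b hlk_np hlk_b hlk_a
  by_cases hlj : l = j
  · subst hlj
    exact caseKI hα hβ orth hji_np hji_a hji_b hlk_np hlk_b hlk_a
  -- disjoint case
  have hk : inner' (α k) (α i) = 0 ∨ inner' (α k) (α j) = 0 := by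
    rcases orth k i hki with ha | hb
    · exact Or.inl ha
    · rcases orth k j hkj with ha' | hb'
      · exact Or.inr ha'
      · exact absurd (eq_zero_of_perp_perp (hβ i) (hβ j) hij_b hb hb') (hβ k)
  have hl : inner' (α l) (α i) = 0 ∨ inner' (α l) (α j) = 0 := by
    rcases orth l i hli with ha | hb
    · exact Or.inl ha
    · rcases orth l j hlj with ha' | hb'
      · exact Or.inr ha'
      · exact absurd (eq_zero_of_perp_perp (hβ i) (hβ j) hij_b hb hb') (hβ l)
  rcases hk with hk1 | hk2 <;> rcases hl with hl1 | hl2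
  · -- both ⊥ α i
    obtain ⟨c, hc⟩ := parallel_of_perp_perp (hα l) (hα i) hk1 hl1
    exact inner'_ne_zero_of_parallel (hα k) hc hkl_a
  · -- α k ⊥ α i, α l ⊥ α j : α i ∥ α l
    obtain ⟨c, hc⟩ := parallel_of_perp_perp (hα l) (hα k)
      (inner'_eq_zero_symm hk1) hlk_a
    apply hij_a
    rw [hc, inner'_smul_left, hl2, mul_zero]
  · -- α k ⊥ α j, α l ⊥ α i : α j ∥ α l
    obtain ⟨c, hc⟩ := parallel_of_perp_perp (hα l) (hα k)
      (inner'_eq_zero_symm hk2) hlk_a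
    apply hji_a
    rw [hc, inner'_smul_left, hl1, mul_zero]
  · -- both ⊥ α j
    obtain ⟨c, hc⟩ := parallel_of_perp_perp (hα l) (hα j) hk2 hl2
    exact inner'_ne_zero_of_parallel (hα k) hc hkl_a
end dich


open Kronecker in
theorem stmt8 {ι : Type*} [Fintype ι] [DecidableEq ι]
    (ρ : Matrix (Fin 2 × Fin 2) (Fin 2 × Fin 2) ℂ)
    (hpsd : ρ.PosSemidef) (htr : ρ.trace = 1)
    (lam : ι → ℝ) (α β : ι → Fin 2 → ℂ)
    (hlam : ∀ i, 0 < lam i)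
    (hON : ∀ i j, inner' (tens (α i) (β i)) (tens (α j) (β j)) = if i = j then 1 else 0)
    (hρ : ρ = ∑ i, ((lam i : ℝ) : ℂ) • proj (tens (α i) (β i))) :
    (∃ (m : ℕ) (p : Fin m → ℝ) (ψ : Fin m → Fin 2 → ℂ)
        (σ : Fin m → Matrix (Fin 2) (Fin 2) ℂ),
        (∀ k, 0 ≤ p k) ∧ (∑ k, p k = 1) ∧
        (∀ k l, inner' (ψ k) (ψ l) = if k = l then 1 else 0) ∧
        (∀ k, (σ k).PosSemidef ∧ (σ k).trace = 1) ∧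
        ρ = ∑ k, ((p k : ℝ) : ℂ) • (proj (ψ k) ⊗ₖ σ k)) ∨
    (∃ (m : ℕ) (p : Fin m → ℝ) (ψ : Fin m → Fin 2 → ℂ)
        (σ : Fin m → Matrix (Fin 2) (Fin 2) ℂ),
        (∀ k, 0 ≤ p k) ∧ (∑ k, p k = 1) ∧
        (∀ k l, inner' (ψ k) (ψ l) = if k = l then 1 else 0) ∧
        (∀ k, (σ k).PosSemidef ∧ (σ k).trace = 1) ∧
        ρ = ∑ k, ((p k : ℝ) : ℂ) • (σ k ⊗ₖ proj (ψ k))) := by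
  classical
  rcases isEmpty_or_nonempty ι with hemp | hne
  · exfalso
    rw [hρ, Finset.univ_eq_empty, Finset.sum_empty] at htr
    simp at htr
  have hdiag : ∀ i, inner' (tens (α i) (β i)) (tens (α i) (β i)) = 1 := fun i => by
    simpa using hON i i
  have hnormAB : ∀ i, inner' (α i) (α i) * inner' (β i) (β i) = 1 := fun i => by
    have := hdiag i
    rwa [inner'_tens] at this
  have hα : ∀ i, α i ≠ 0 := by
    intro i h
    have := hnormAB i
    rw [h] at this
    simp [inner'_def] at this
  have hβ : ∀ i, β i ≠ 0 := by
    intro i h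
    have := hnormAB i
    rw [h] at this
    simp [inner'_def] at this
  have horth : ∀ i j, i ≠ j → inner' (α i) (α j) = 0 ∨ inner' (β i) (β j) = 0 := by
    intro i j hij
    have := hON i j
    rw [if_neg hij, inner'_tens] at this
    exact mul_eq_zero.1 this
  have hsum : ∑ i, lam i = 1 := by
    have h1 : ρ.trace = ∑ i, ((lam i : ℝ) : ℂ) := by
      rw [hρ, Matrix.trace_sum]
      refine Finset.sum_congr rfl fun i _ => ?_
      rw [Matrix.trace_smul, trace_proj, hdiag i, smul_eq_mul, mul_one]
    have h2 : ((∑ i, lam i : ℝ) : ℂ) = 1 := by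
      push_cast
      rw [← h1, htr]
    exact_mod_cast h2
  have hρ' : ρ = ∑ i, ((lam i : ℝ) : ℂ) • (proj (α i) ⊗ₖ proj (β i)) := by
    rw [hρ]
    exact Finset.sum_congr rfl fun i _ => by rw [proj_tens]
  rcases dichotomy hα hβ horth with hparA | hparB
  · obtain ⟨p, ψ, σ, hp0, hpsum, hψon, hσg, hid⟩ := core lam α β hlam hsum hnormAB hparA
    exact Or.inl ⟨2, p, ψ, σ, hp0, hpsum, hψon, hσg, by rw [hρ']; exact hid⟩
  · have hnormBA : ∀ i, inner' (β i) (β i) * inner' (α i) (α i) = 1 := fun i => by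
      rw [mul_comm]; exact hnormAB i
    obtain ⟨p, ψ, σ, hp0, hpsum, hψon, hσg, hid⟩ := core lam β α hlam hsum hnormBA hparB
    refine Or.inr ⟨2, p, ψ, σ, hp0, hpsum, hψon, hσg, ?_⟩
    have hswap := congrArg mswap hid
    rw [mswap_sum, mswap_sum] at hswap
    simp only [mswap_smul, mswap_kron] at hswap
    rw [hρ']
    exact hswap
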